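/- Let 0 < a₀ < a₁ < a₂. Then (a₁/a₀)·E(√(1 - a₀/a₁)) - K(√(1 - a₀/a₁)) > 0, where K and E are the complete elliptic integrals of the first and second kind. -/

import Mathlib

open Real Set Filter MeasureTheory

lemma base_integrable : IntervalIntegrable (fun s : ℝ => 1 / Real.sqrt (1 - s^2)) volume 0 1 := by
  apply intervalIntegral.intervalIntegrable_deriv_of_nonneg (g := Real.arcsin)
  · exact Real.continuous_arcsin.continuousOn
  · intro x hx
    norm_num at hx
    exact Real.hasDerivAt_arcsin (by linarith [hx.1]) (ne_of_lt hx.2)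
  · intro x hx
    positivity

theorem stmt3 (a₀ a₁ a₂ : ℝ) (h0 : 0 < a₀) (h1 : a₀ < a₁) (h2 : a₁ < a₂) :
    0 < (a₁ / a₀) *
          (∫ s in (0:ℝ)..1,
            Real.sqrt (1 - (Real.sqrt (1 - a₀/a₁))^2 * s^2) / Real.sqrt (1 - s^2))
        - ∫ s in (0:ℝ)..1,
            1 / Real.sqrt ((1 - s^2) * (1 - (Real.sqrt (1 - a₀/a₁))^2 * s^2)) := by
  set c : ℝ := a₀ / a₁ with hc
  have hc0 : 0 < c := div_pos h0 (lt_trans h0 h1)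
  have hc1 : c < 1 := (div_lt_one (lt_trans h0 h1)).2 h1
  have hk : (Real.sqrt (1 - c))^2 = 1 - c := Real.sq_sqrt (by linarith)
  rw [hk]
  set fE : ℝ → ℝ := fun s => Real.sqrt (1 - (1 - c) * s^2) / Real.sqrt (1 - s^2) with hfE
  set fK : ℝ → ℝ := fun s => 1 / Real.sqrt ((1 - s^2) * (1 - (1 - c) * s^2)) with hfK
  have hA_ge : ∀ s : ℝ, s ∈ Set.Ioc (0:ℝ) 1 → c ≤ 1 - (1 - c) * s^2 := by
    intro s hs
    have hs2 : s^2 ≤ 1 := by nlinarith [hs.1, hs.2]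
    nlinarith
  have hIoc : Set.uIoc (0:ℝ) 1 = Set.Ioc (0:ℝ) 1 := uIoc_of_le (by norm_num)
  -- integrability of fK
  have hKint : IntervalIntegrable fK volume 0 1 := by
    apply (base_integrable.const_mul (1 / Real.sqrt c)).mono_fun
    · apply Measurable.aestronglyMeasurable
      exact measurable_const.div (by fun_prop)
    · rw [hIoc]
      filter_upwards [ae_restrict_mem measurableSet_Ioc] with s hs
      have hA : c ≤ 1 - (1 - c) * s^2 := hA_ge s hs
      simp only [hfK, Real.norm_eq_abs]
      rw [abs_of_nonneg (by positivity), abs_of_nonneg (by positivity)]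
      rcases eq_or_lt_of_le hs.2 with h | h
      · subst h
        norm_num
      · have hB : (0:ℝ) < 1 - s^2 := by nlinarith [hs.1]
        have hden : Real.sqrt ((1 - s^2) * c) ≤ Real.sqrt ((1 - s^2) * (1 - (1 - c) * s^2)) := by
          apply Real.sqrt_le_sqrt; nlinarith
        have hdpos : 0 < Real.sqrt ((1 - s^2) * c) := Real.sqrt_pos.2 (by positivity)
        calc 1 / Real.sqrt ((1 - s^2) * (1 - (1 - c) * s^2))
            ≤ 1 / Real.sqrt ((1 - s^2) * c) :=
              one_div_le_one_div_of_le hdpos hden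
          _ = 1 / Real.sqrt c * (1 / Real.sqrt (1 - s^2)) := by
              rw [Real.sqrt_mul hB.le]
              field_simp
  -- integrability of fE
  have hEint : IntervalIntegrable fE volume 0 1 := by
    apply base_integrable.mono_fun
    · apply Measurable.aestronglyMeasurable
      exact (by fun_prop : Measurable fun s : ℝ => Real.sqrt (1 - (1 - c) * s^2)).div (by fun_prop)
    · rw [hIoc]
      filter_upwards [ae_restrict_mem measurableSet_Ioc] with s hs
      simp only [hfE, Real.norm_eq_abs]
      rw [abs_of_nonneg (by positivity), abs_of_nonneg (by positivity)]
      have h1 : Real.sqrt (1 - (1 - c) * s^2) ≤ 1 := by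
        calc Real.sqrt (1 - (1 - c) * s^2) ≤ Real.sqrt 1 :=
              Real.sqrt_le_sqrt (by nlinarith [hs.1, hc1])
          _ = 1 := Real.sqrt_one
      calc Real.sqrt (1 - (1 - c) * s^2) / Real.sqrt (1 - s^2)
          = Real.sqrt (1 - (1 - c) * s^2) * (1 / Real.sqrt (1 - s^2)) := by ring
        _ ≤ 1 * (1 / Real.sqrt (1 - s^2)) :=
            mul_le_mul_of_nonneg_right h1 (by positivity)
        _ = 1 / Real.sqrt (1 - s^2) := one_mul _
  -- key strict inequality
  have hdiff : 0 < ∫ s in (0:ℝ)..1, (fE s - c * fK s) := by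
    apply intervalIntegral.intervalIntegral_pos_of_pos_on
      (hEint.sub (hKint.const_mul c))
    · intro s hs
      have hs' : s ∈ Set.Ioc (0:ℝ) 1 := ⟨hs.1, hs.2.le⟩
      have hB : (0:ℝ) < 1 - s^2 := by nlinarith [hs.1, hs.2]
      have hA : c < 1 - (1 - c) * s^2 := by nlinarith [hs.1, hs.2]
      have hA0 : (0:ℝ) < 1 - (1 - c) * s^2 := lt_trans hc0 hA
      have hsB : 0 < Real.sqrt (1 - s^2) := Real.sqrt_pos.2 hB
      have hsA : 0 < Real.sqrt (1 - (1 - c) * s^2) := Real.sqrt_pos.2 hA0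
      simp only [hfE, hfK]
      rw [sub_pos, Real.sqrt_mul hB.le, mul_one_div]
      rw [div_lt_div_iff₀ (by positivity) hsB]
      have : Real.sqrt (1 - (1 - c) * s^2) * (Real.sqrt (1 - s^2) * Real.sqrt (1 - (1 - c) * s^2))
          = (1 - (1 - c) * s^2) * Real.sqrt (1 - s^2) := by
        rw [show Real.sqrt (1 - (1 - c) * s^2) * (Real.sqrt (1 - s^2) * Real.sqrt (1 - (1 - c) * s^2))
            = (Real.sqrt (1 - (1 - c) * s^2) * Real.sqrt (1 - (1 - c) * s^2)) * Real.sqrt (1 - s^2) by ring,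
          Real.mul_self_sqrt hA0.le]
      rw [this]
      exact mul_lt_mul_of_pos_right hA hsB
    · norm_num
  rw [intervalIntegral.integral_sub hEint (hKint.const_mul c),
    intervalIntegral.integral_const_mul] at hdiff
  have hinv : a₁ / a₀ = 1 / c := by
    rw [hc, one_div_div]
  rw [hinv]
  have h01 : (1/c) * ((∫ s in (0:ℝ)..1, fE s) - c * ∫ s in (0:ℝ)..1, fK s) > 0 := by
    apply mul_pos (by positivity) hdiff
  calc (0:ℝ) < (1/c) * ((∫ s in (0:ℝ)..1, fE s) - c * ∫ s in (0:ℝ)..1, fK s) := h01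
    _ = 1 / c * (∫ s in (0:ℝ)..1, fE s) - ∫ s in (0:ℝ)..1, fK s := by
        rw [mul_sub, ← mul_assoc, one_div_mul_cancel hc0.ne', one_mul]
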